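/- Let G be a subgroup of PL⁺(I) whose common fixed set fix(G) = {x ∈ [0,1] : g(x) = x for all g ∈ G} equals {0,1}, and let G₀ be the subgroup of G consisting of those elements that pointwise fix a neighborhood of 0 and a neighborhood of 1 in [0,1]. Then for every g in the commutator subgroup [G₀,G₀], the stable commutator length of g computed in G is zero. -/

import Mathlib

open scoped commutatorElement

namespace SclAux
variable {H : Type*} [Group H]

/-- Conjugation by `t ^ i`. -/
def ctc (t : H) (i : ℕ) (x : H) : H := t ^ i * x * (t ^ i)⁻¹

/-- `∏_{i=1}^{n} t^i w t^{-i}`. -/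
def Pprod (t w : H) : ℕ → H
  | 0 => 1
  | n + 1 => Pprod t w n * ctc t (n + 1) w

/-- Auxiliary sequence. -/
def aseq (t g : H) : ℕ → H
  | 0 => 1
  | n + 1 => g ^ (n + 1) * (t * aseq t g n * t⁻¹)

theorem ctc_mul (t : H) (i : ℕ) (x y : H) : ctc t i (x * y) = ctc t i x * ctc t i y := by
  simp only [ctc]; group

theorem ctc_one (t : H) (i : ℕ) : ctc t i 1 = 1 := by simp [ctc]

theorem ctc_inv (t : H) (i : ℕ) (x : H) : ctc t i x⁻¹ = (ctc t i x)⁻¹ := by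
  simp only [ctc]; group

theorem ctc_zero (t : H) (x : H) : ctc t 0 x = x := by simp [ctc]

variable {t : H} {Fx : H → Prop}

theorem Pprod_comm (hcomm : ∀ i j x y, i ≠ j → Fx x → Fx y → Commute (ctc t i x) (ctc t j y)) {w x : H} (hw : Fx w) (hx : Fx x) {i : ℕ} :
    ∀ n, (∀ j, j < n → i ≠ j + 1) → Commute (ctc t i x) (Pprod t w n)
  | 0, _ => by simpa [Pprod] using Commute.one_right _
  | n + 1, hi => by
    rw [Pprod]
    exact (Pprod_comm hcomm hw hx n fun j hj => hi j (Nat.lt_succ_of_lt hj)).mul_right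
      (hcomm i (n + 1) x w (hi n (Nat.lt_succ_self n)) hx hw)

theorem Pprod_one (t : H) : ∀ n, Pprod t 1 n = 1
  | 0 => rfl
  | n + 1 => by rw [Pprod, Pprod_one t n, ctc_one, mul_one]

theorem Pprod_mul (hcomm : ∀ i j x y, i ≠ j → Fx x → Fx y → Commute (ctc t i x) (ctc t j y)) {x y : H} (hx : Fx x) (hy : Fx y) :
    ∀ n, Pprod t (x * y) n = Pprod t x n * Pprod t y n
  | 0 => by simp [Pprod]
  | n + 1 => by
    rw [Pprod, Pprod, Pprod, Pprod_mul hcomm hx hy n, ctc_mul]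
    have h := (Pprod_comm (i := n + 1) hcomm hy hx n (fun j hj => by omega)).eq
    -- h : ctc t (n+1) x * Pprod t y n = Pprod t y n * ctc t (n+1) x
    calc Pprod t x n * Pprod t y n * (ctc t (n + 1) x * ctc t (n + 1) y)
        = Pprod t x n * (Pprod t y n * ctc t (n + 1) x) * ctc t (n + 1) y := by group
      _ = Pprod t x n * (ctc t (n + 1) x * Pprod t y n) * ctc t (n + 1) y := by rw [← h]
      _ = Pprod t x n * ctc t (n + 1) x * (Pprod t y n * ctc t (n + 1) y) := by group

theorem Pprod_inv (hcomm : ∀ i j x y, i ≠ j → Fx x → Fx y → Commute (ctc t i x) (ctc t j y)) {x : H} (hx : Fx x) (hx' : Fx x⁻¹) (n : ℕ) :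
    Pprod t x⁻¹ n = (Pprod t x n)⁻¹ := by
  have := Pprod_mul hcomm hx hx' n
  rw [mul_inv_cancel, Pprod_one] at this
  exact eq_inv_of_mul_eq_one_right this.symm

theorem Pprod_commutator (hcomm : ∀ i j x y, i ≠ j → Fx x → Fx y → Commute (ctc t i x) (ctc t j y)) {x y : H} (hx : Fx x) (hy : Fx y)
    (hmul : ∀ a b, Fx a → Fx b → Fx (a * b)) (hinv : ∀ a, Fx a → Fx a⁻¹) (n : ℕ) :
    Pprod t ⁅x, y⁆ n = ⁅Pprod t x n, Pprod t y n⁆ := by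
  rw [commutatorElement_def, commutatorElement_def,
    Pprod_mul hcomm (hmul _ _ (hmul _ _ hx hy) (hinv _ hx)) (hinv _ hy),
    Pprod_mul hcomm (hmul _ _ hx hy) (hinv _ hx),
    Pprod_mul hcomm hx hy, Pprod_inv hcomm hx (hinv _ hx), Pprod_inv hcomm hy (hinv _ hy)]

theorem Pprod_shift (t w : H) : ∀ n, ctc t 1 w * (t * Pprod t w n * t⁻¹) = Pprod t w (n + 1)
  | 0 => by simp [Pprod, ctc]
  | n + 1 => by
    have h2 : t * ctc t (n + 1) w * t⁻¹ = ctc t (n + 2) w := by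
      simp only [ctc, pow_succ' t (n + 1), mul_inv_rev]; group
    calc ctc t 1 w * (t * Pprod t w (n + 1) * t⁻¹)
        = (ctc t 1 w * (t * Pprod t w n * t⁻¹)) * (t * ctc t (n + 1) w * t⁻¹) := by
          rw [Pprod]; group
      _ = Pprod t w (n + 1) * ctc t (n + 2) w := by rw [Pprod_shift t w n, h2]
      _ = Pprod t w (n + 2) := rfl

theorem aseq_spec (hcomm : ∀ i j x y, i ≠ j → Fx x → Fx y → Commute (ctc t i x) (ctc t j y))
    {g : H} (hg : Fx g) :
    ∀ n, g ^ n = aseq t g n * t * (aseq t g n)⁻¹ * t⁻¹ * Pprod t g n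
  | 0 => by simp [aseq, Pprod]
  | n + 1 => by
    have hPg : Commute g (Pprod t g n) := by
      have := Pprod_comm (i := 0) hcomm hg hg n (fun j hj => by omega)
      rwa [ctc_zero] at this
    have hP1 : Pprod t g (n + 1) = t * (Pprod t g n * g) * t⁻¹ := by
      rw [← Pprod_shift t g n, ← hPg.eq]
      simp only [ctc, pow_one]; group
    have IH := aseq_spec hcomm hg n
    have h2 : aseq t g n * t * (aseq t g n)⁻¹ * t⁻¹ = g ^ n * (Pprod t g n)⁻¹ := by
      rw [IH]; group
    have hcom2 : (Pprod t g n)⁻¹ * (g ^ (n + 1))⁻¹ = (g ^ (n + 1))⁻¹ * (Pprod t g n)⁻¹ :=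
      ((hPg.pow_left (n + 1)).inv_left.inv_right).eq.symm
    show g ^ (n + 1) = (g ^ (n + 1) * (t * aseq t g n * t⁻¹)) * t *
        (g ^ (n + 1) * (t * aseq t g n * t⁻¹))⁻¹ * t⁻¹ * Pprod t g (n + 1)
    rw [hP1]
    calc g ^ (n + 1)
        = g ^ (n + 1) * t * (g ^ n * ((Pprod t g n)⁻¹ * (g ^ (n + 1))⁻¹)) *
            (Pprod t g n * g) * t⁻¹ := by
          rw [hcom2]; group
      _ = g ^ (n + 1) * t * (g ^ n * (Pprod t g n)⁻¹ * (g ^ (n + 1))⁻¹) *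
            (Pprod t g n * g) * t⁻¹ := by group
      _ = g ^ (n + 1) * t * (aseq t g n * t * (aseq t g n)⁻¹ * t⁻¹ * (g ^ (n + 1))⁻¹) *
            (Pprod t g n * g) * t⁻¹ := by rw [h2]
      _ = (g ^ (n + 1) * (t * aseq t g n * t⁻¹)) * t *
            (g ^ (n + 1) * (t * aseq t g n * t⁻¹))⁻¹ * t⁻¹ *
            (t * (Pprod t g n * g) * t⁻¹) := by group

theorem Fx_prod (hone : Fx 1) (hmul : ∀ a b, Fx a → Fx b → Fx (a * b)) :
    ∀ L : List H, (∀ w ∈ L, Fx w) → Fx L.prod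
  | [], _ => by simpa using hone
  | w :: L', h => by
    rw [List.prod_cons]
    exact hmul _ _ (h w (List.mem_cons_self)) (Fx_prod hone hmul L' fun x hx => h x (List.mem_cons_of_mem _ hx))

theorem Pprod_list (hcomm : ∀ i j x y, i ≠ j → Fx x → Fx y → Commute (ctc t i x) (ctc t j y))
    (hone : Fx 1) (hmul : ∀ a b, Fx a → Fx b → Fx (a * b)) (n : ℕ) :
    ∀ L : List H, (∀ w ∈ L, Fx w) →
      Pprod t L.prod n = (L.map (fun w => Pprod t w n)).prod
  | [], _ => by simp [Pprod_one]
  | w :: L', h => by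
    rw [List.prod_cons, List.map_cons, List.prod_cons,
      Pprod_mul hcomm (h w (List.mem_cons_self)) (Fx_prod hone hmul L' fun x hx => h x (List.mem_cons_of_mem _ hx)),
      Pprod_list hcomm hone hmul n L' fun x hx => h x (List.mem_cons_of_mem _ hx)]

/-- Main abstract bound: if `g` is a product of the commutators recorded in `L`, with all
entries satisfying `Fx`, then every power of `g` is a product of `L.length + 1` commutators. -/
theorem pow_eq_commutator_prod
    (hcomm : ∀ i j x y, i ≠ j → Fx x → Fx y → Commute (ctc t i x) (ctc t j y))
    (hone : Fx 1) (hmul : ∀ a b, Fx a → Fx b → Fx (a * b)) (hinv : ∀ a, Fx a → Fx a⁻¹)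
    (L : List (H × H)) (hL : ∀ p ∈ L, Fx p.1 ∧ Fx p.2)
    {g : H} (hgL : g = (L.map fun p => ⁅p.1, p.2⁆).prod) (n : ℕ) :
    ∃ a b : Fin (L.length + 1) → H,
      g ^ n = (List.ofFn fun i => ⁅a i, b i⁆).prod := by
  have hg : Fx g := by
    rw [hgL]
    refine Fx_prod hone hmul _ ?_
    intro w hw
    rw [List.mem_map] at hw
    obtain ⟨p, hp, rfl⟩ := hw
    have h1 := (hL p hp).1; have h2 := (hL p hp).2
    exact hmul _ _ (hmul _ _ (hmul _ _ h1 h2) (hinv _ h1)) (hinv _ h2)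
  refine ⟨Fin.cons (aseq t g n) (fun j => Pprod t (L.get j).1 n),
          Fin.cons t (fun j => Pprod t (L.get j).2 n), ?_⟩
  rw [List.ofFn_succ]
  simp only [Fin.cons_zero, Fin.cons_succ]
  have hofn : (List.ofFn fun j : Fin L.length =>
      ⁅Pprod t (L.get j).1 n, Pprod t (L.get j).2 n⁆) =
      L.map fun p => ⁅Pprod t p.1 n, Pprod t p.2 n⁆ := by
    conv_rhs => rw [← List.ofFn_get L]
    rw [List.map_ofFn]
    rfl
  have hmapeq : (L.map fun p => ⁅Pprod t p.1 n, Pprod t p.2 n⁆) =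
      (L.map fun p => ⁅p.1, p.2⁆).map fun w => Pprod t w n := by
    rw [List.map_map]
    refine List.map_congr_left fun p hp => ?_
    exact (Pprod_commutator hcomm (hL p hp).1 (hL p hp).2 hmul hinv n).symm
  have hPg : Pprod t g n = (L.map fun p => ⁅Pprod t p.1 n, Pprod t p.2 n⁆).prod := by
    rw [hmapeq, ← Pprod_list hcomm hone hmul n]
    · rw [hgL]
    · intro w hw
      rw [List.mem_map] at hw
      obtain ⟨p, hp, rfl⟩ := hw
      have h1 := (hL p hp).1; have h2 := (hL p hp).2
      exact hmul _ _ (hmul _ _ (hmul _ _ h1 h2) (hinv _ h1)) (hinv _ h2)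
  rw [List.prod_cons, hofn, ← hPg, commutatorElement_def]
  calc g ^ n = aseq t g n * t * (aseq t g n)⁻¹ * t⁻¹ * Pprod t g n := aseq_spec hcomm hg n
    _ = aseq t g n * t * (aseq t g n)⁻¹ * t⁻¹ * Pprod t g n := rfl

end SclAux

instance : Fact ((0:ℝ) ≤ 1) := ⟨zero_le_one⟩
noncomputable instance : CompleteLattice unitInterval := Set.Icc.completeLattice

/-- The property of fixing every point of `[0,1]` outside of `(δ, 1-δ)`. -/
def FixOutside (δ : ℝ) (h : Equiv.Perm unitInterval) : Prop :=
  ∀ x : unitInterval, ((x : ℝ) ≤ δ ∨ 1 - δ ≤ (x : ℝ)) → h x = x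

theorem FixOutside.mono {δ δ' : ℝ} {h} (hle : δ ≤ δ') (hf : FixOutside δ' h) :
    FixOutside δ h := fun x hx => hf x (by
  rcases hx with h1 | h1
  · exact Or.inl (le_trans h1 hle)
  · exact Or.inr (by linarith))

theorem FixOutside.one (δ : ℝ) : FixOutside δ 1 := fun _ _ => rfl

theorem FixOutside.mul {δ : ℝ} {a b} (ha : FixOutside δ a) (hb : FixOutside δ b) :
    FixOutside δ (a * b) := fun x hx => by
  simp only [Equiv.Perm.mul_apply, hb x hx, ha x hx]

theorem FixOutside.inv {δ : ℝ} {a} (ha : FixOutside δ a) : FixOutside δ a⁻¹ := fun x hx =>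
  a.injective (by simp [ha x hx])

theorem commute_of_coe {G : Subgroup (Equiv.Perm unitInterval)} {a b : G}
    (h : Commute (a : Equiv.Perm unitInterval) (b : Equiv.Perm unitInterval)) :
    Commute a b := by
  have : ((a * b : G) : Equiv.Perm unitInterval) = ((b * a : G) : Equiv.Perm unitInterval) := by
    push_cast
    exact h.eq
  exact Subtype.ext this


open Filter

/-- The commutator length of `g`. -/
noncomputable def commLength {G : Type*} [Group G] (g : G) : ℕ :=
  sInf {m : ℕ | ∃ a b : Fin m → G, g = (List.ofFn fun i => ⁅a i, b i⁆).prod}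

/-- Stable commutator length. -/
noncomputable def scl {G : Type*} [Group G] (g : G) : ℝ :=
  Filter.liminf (fun n : ℕ => (commLength (g ^ n) : ℝ) / n) Filter.atTop

/-- Homogeneous quasimorphism. -/
def IsHomQM {G : Type*} [Group G] (f : G → ℝ) : Prop :=
  (∀ (a : G) (n : ℤ), f (a ^ n) = n * f a) ∧
  BddAbove {d : ℝ | ∃ a b : G, d = |f a + f b - f (a * b)|}

noncomputable def defect {G : Type*} [Group G] (f : G → ℝ) : ℝ :=
  sSup {d : ℝ | ∃ a b : G, d = |f a + f b - f (a * b)|}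

/-- Orientation-preserving piecewise-linear homeomorphism of [0,1]. -/
def IsPLplus (g : Equiv.Perm unitInterval) : Prop :=
  StrictMono (fun x : unitInterval => (g x : ℝ)) ∧
  ∃ (k : ℕ) (x : Fin (k + 1) → ℝ), StrictMono x ∧ x 0 = 0 ∧ x (Fin.last k) = 1 ∧
    ∀ i : Fin k, ∃ a b : ℝ, ∀ t : unitInterval,
      x i.castSucc ≤ (t : ℝ) → (t : ℝ) ≤ x i.succ → (g t : ℝ) = a * (t : ℝ) + b

/-- The subgroup $G_0$ of a group $G$ of homeomorphisms of $[0,1]$ consisting of the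
elements that pointwise fix a neighborhood of $0$ and a neighborhood of $1$. -/
def fixesEndNbhds (G : Subgroup (Equiv.Perm unitInterval)) : Subgroup G where
  carrier := {g : G | ∃ δ > 0, ∀ t : unitInterval,
    ((t : ℝ) ≤ δ → (g : Equiv.Perm unitInterval) t = t) ∧
    (1 - δ ≤ (t : ℝ) → (g : Equiv.Perm unitInterval) t = t)}
  one_mem' := ⟨1, one_pos, fun t => ⟨fun _ => rfl, fun _ => rfl⟩⟩
  mul_mem' := by
    rintro a b ⟨δ₁, hδ₁, h₁⟩ ⟨δ₂, hδ₂, h₂⟩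
    refine ⟨min δ₁ δ₂, lt_min hδ₁ hδ₂, fun t => ⟨fun ht => ?_, fun ht => ?_⟩⟩
    · have hb := (h₂ t).1 (le_trans ht (min_le_right δ₁ δ₂))
      have ha := (h₁ t).1 (le_trans ht (min_le_left δ₁ δ₂))
      simp [Equiv.Perm.mul_apply, hb, ha]
    · have hb := (h₂ t).2 (by linarith [min_le_right δ₁ δ₂])
      have ha := (h₁ t).2 (by linarith [min_le_left δ₁ δ₂])
      simp [Equiv.Perm.mul_apply, hb, ha]
  inv_mem' := by
    rintro a ⟨δ, hδ, h⟩
    refine ⟨δ, hδ, fun t => ⟨fun ht => ?_, fun ht => ?_⟩⟩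
    · exact (a : Equiv.Perm unitInterval).injective (by simp [(h t).1 ht])
    · exact (a : Equiv.Perm unitInterval).injective (by simp [(h t).2 ht])

/-- Case 1 of Theorem A: if $G \le \mathrm{PL}^+(I)$ has $\mathrm{fix}(G) = \{0,1\}$,
then stable commutator length (computed in $G$) vanishes on $[G_0, G_0]$, where
$G_0$ consists of the elements fixing neighborhoods of the endpoints. -/
theorem scl_vanishes_on_commutator_of_end_fixing_subgroup
    (G : Subgroup (Equiv.Perm unitInterval)) (hG : ∀ g ∈ G, IsPLplus g)
    (hfix : {x : unitInterval | ∀ g ∈ G, g x = x} = {0, 1})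
    (g : G) (hg : g ∈ ⁅fixesEndNbhds G, fixesEndNbhds G⁆) :
    scl g = 0 := by
  classical
  -- Step 1: represent `g` as a product of commutators of elements of `G₀`.
  have hrep : ∃ L : List (G × G),
      (∀ p ∈ L, p.1 ∈ fixesEndNbhds G ∧ p.2 ∈ fixesEndNbhds G) ∧
      g = (L.map fun p => ⁅p.1, p.2⁆).prod := by
    rw [Subgroup.commutator_def] at hg
    refine Subgroup.closure_induction (p := fun x _ => ∃ L : List (G × G),
      (∀ p ∈ L, p.1 ∈ fixesEndNbhds G ∧ p.2 ∈ fixesEndNbhds G) ∧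
      x = (L.map fun p => ⁅p.1, p.2⁆).prod) ?_ ?_ ?_ ?_ hg
    · rintro x ⟨p, hp, q, hq, rfl⟩
      exact ⟨[(p, q)], by simpa using ⟨hp, hq⟩, by simp⟩
    · exact ⟨[], by simp, by simp⟩
    · rintro x y _ _ ⟨L1, h1, rfl⟩ ⟨L2, h2, rfl⟩
      refine ⟨L1 ++ L2, ?_, by simp⟩
      intro p hp
      rcases List.mem_append.mp hp with h | h
      · exact h1 p h
      · exact h2 p h
    · rintro x _ ⟨L1, h1, rfl⟩
      refine ⟨(L1.map Prod.swap).reverse, ?_, ?_⟩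
      · intro p hp
        rw [List.mem_reverse, List.mem_map] at hp
        obtain ⟨q, hq, rfl⟩ := hp
        exact ⟨(h1 q hq).2, (h1 q hq).1⟩
      · rw [List.prod_inv_reverse]
        congr 1
        simp only [List.map_reverse, List.map_map]
        refine congrArg List.reverse ?_
        refine List.map_congr_left fun p _ => ?_
        simp [Function.comp, commutatorElement_inv]
  obtain ⟨L, hL, hgL⟩ := hrep
  -- Step 2: a uniform δ.
  have hδex : ∀ L' : List (G × G),
      (∀ p ∈ L', p.1 ∈ fixesEndNbhds G ∧ p.2 ∈ fixesEndNbhds G) →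
      ∃ δ : ℝ, 0 < δ ∧ δ ≤ 1/3 ∧ ∀ p ∈ L',
        FixOutside δ ((p.1 : G) : Equiv.Perm unitInterval) ∧
        FixOutside δ ((p.2 : G) : Equiv.Perm unitInterval) := by
    intro L'
    induction L' with
    | nil => exact fun _ => ⟨1/3, by norm_num, le_refl _, by simp⟩
    | cons p L'' ih =>
      intro h
      obtain ⟨δ₀, hδ₀, hδ₀le, h₀⟩ := ih fun q hq => h q (List.mem_cons_of_mem _ hq)
      obtain ⟨δ₁, hδ₁, hf₁⟩ := (h p (List.mem_cons_self)).1
      obtain ⟨δ₂, hδ₂, hf₂⟩ := (h p (List.mem_cons_self)).2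
      refine ⟨min δ₀ (min δ₁ δ₂), by positivity, le_trans (min_le_left _ _) hδ₀le, ?_⟩
      intro q hq
      rcases List.mem_cons.mp hq with rfl | hq'
      · constructor
        · refine FixOutside.mono (le_trans (min_le_right _ _) (min_le_left _ _)) ?_
          intro x hx
          rcases hx with h' | h'
          · exact (hf₁ x).1 h'
          · exact (hf₁ x).2 h'
        · refine FixOutside.mono (le_trans (min_le_right _ _) (min_le_right _ _)) ?_
          intro x hx
          rcases hx with h' | h'
          · exact (hf₂ x).1 h'
          · exact (hf₂ x).2 h'
      · exact ⟨FixOutside.mono (min_le_left _ _) (h₀ q hq').1,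
          FixOutside.mono (min_le_left _ _) (h₀ q hq').2⟩
  obtain ⟨δ, hδpos, hδ3, hδL⟩ := hδex L hL
  set pt : unitInterval := ⟨1 - δ, by constructor <;> linarith⟩ with hpt
  -- Step 3: find `t ∈ G` pushing `1 - δ` below `δ`.
  have key : ∃ t : G, (((t : Equiv.Perm unitInterval) pt : ℝ)) < δ := by
    by_contra hcon
    push_neg at hcon
    set S : Set unitInterval := Set.range fun s : G => (s : Equiv.Perm unitInterval) pt with hS
    have hSne : S.Nonempty := ⟨_, ⟨1, rfl⟩⟩
    set c : unitInterval := sInf S with hc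
    have hfixc : ∀ s : G, (s : Equiv.Perm unitInterval) c = c := by
      intro s
      have hm : StrictMono fun x : unitInterval => (((s : Equiv.Perm unitInterval) x : ℝ)) :=
        (hG _ s.2).1
      have hm' : StrictMono ((s : Equiv.Perm unitInterval) : unitInterval → unitInterval) :=
        fun a b hab => Subtype.coe_lt_coe.mp (hm hab)
      let e : unitInterval ≃o unitInterval :=
        { toEquiv := (s : Equiv.Perm unitInterval), map_rel_iff' := hm'.le_iff_le }
      have himg : e '' S = S := by
        ext z
        constructor
        · rintro ⟨w, ⟨τ, rfl⟩, rfl⟩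
          refine ⟨s * τ, ?_⟩
          show ((s * τ : G) : Equiv.Perm unitInterval) pt = e ((τ : Equiv.Perm unitInterval) pt)
          show ((s * τ : G) : Equiv.Perm unitInterval) pt
            = (s : Equiv.Perm unitInterval) ((τ : Equiv.Perm unitInterval) pt)
          rw [Subgroup.coe_mul]
          rfl
        · rintro ⟨τ, rfl⟩
          refine ⟨((s⁻¹ * τ : G) : Equiv.Perm unitInterval) pt, ⟨s⁻¹ * τ, rfl⟩, ?_⟩
          show (s : Equiv.Perm unitInterval) (((s⁻¹ * τ : G) : Equiv.Perm unitInterval) pt)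
            = (τ : Equiv.Perm unitInterval) pt
          rw [Subgroup.coe_mul, Subgroup.coe_inv]
          simp [Equiv.Perm.mul_apply]
      show e (sInf S) = sInf S
      rw [OrderIso.map_sInf e S, ← sInf_image, himg]
    have hmem : c ∈ ({0, 1} : Set unitInterval) := by
      rw [← hfix]
      exact fun σ hσ => hfixc ⟨σ, hσ⟩
    have hcle : c ≤ pt := sInf_le ⟨1, by simp⟩
    have hc0 : c = 0 := by
      rcases hmem with h | h
      · exact h
      · exfalso
        rw [Set.mem_singleton_iff] at h
        rw [h] at hcle
        have : (1 : ℝ) ≤ 1 - δ := hcle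
        linarith
    have hδle : (⟨δ, by constructor <;> linarith⟩ : unitInterval) ≤ c := by
      refine le_sInf ?_
      rintro z ⟨τ, rfl⟩
      exact hcon τ
    rw [hc0] at hδle
    have : δ ≤ (0 : ℝ) := hδle
    linarith
  obtain ⟨t, ht⟩ := key
  set T : Equiv.Perm unitInterval := (t : Equiv.Perm unitInterval) with hT
  have hmR : StrictMono fun x : unitInterval => ((T x : ℝ)) := (hG _ t.2).1
  -- Step 4: displacement of all positive powers.
  have hdisp : ∀ k : ℕ, ∀ z : unitInterval, (z : ℝ) ≤ 1 - δ → (((T ^ (k + 1)) z : ℝ)) < δ := by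
    intro k
    induction k with
    | zero =>
      intro z hz
      have : (T z : ℝ) ≤ (T pt : ℝ) := hmR.monotone (show z ≤ pt from hz)
      rw [pow_one]
      exact lt_of_le_of_lt this ht
    | succ k ih =>
      intro z hz
      have h1 : ((T ^ (k + 1)) z : ℝ) < δ := ih z hz
      have h2 : ((T ^ (k + 1)) z : ℝ) ≤ 1 - δ := by linarith
      have h3 : (T ((T ^ (k + 1)) z) : ℝ) ≤ (T pt : ℝ) :=
        hmR.monotone (show (T ^ (k + 1)) z ≤ pt from h2)
      have h4 : (T ^ (k + 1 + 1)) z = T ((T ^ (k + 1)) z) := by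
        rw [pow_succ' T (k + 1)]
        rfl
      rw [h4]
      exact lt_of_le_of_lt h3 ht
  -- Step 5: the commuting property.
  set Fx : G → Prop := fun h => FixOutside δ (h : Equiv.Perm unitInterval) with hFx
  have hFone : Fx 1 := by
    show FixOutside δ ((1 : G) : Equiv.Perm unitInterval)
    rw [OneMemClass.coe_one]
    exact FixOutside.one δ
  have hFmul : ∀ a b : G, Fx a → Fx b → Fx (a * b) := by
    intro a b ha hb
    show FixOutside δ ((a * b : G) : Equiv.Perm unitInterval)
    rw [Subgroup.coe_mul]
    exact ha.mul hb
  have hFinv : ∀ a : G, Fx a → Fx a⁻¹ := by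
    intro a ha
    show FixOutside δ ((a⁻¹ : G) : Equiv.Perm unitInterval)
    rw [Subgroup.coe_inv]
    exact ha.inv
  have hdisj : ∀ i j : ℕ, ∀ x y : G, i < j → Fx x → Fx y →
      Equiv.Perm.Disjoint (T ^ i * (x : Equiv.Perm unitInterval) * (T ^ i)⁻¹)
        (T ^ j * (y : Equiv.Perm unitInterval) * (T ^ j)⁻¹) := by
    intro i j x y hij hx hy z
    by_contra hcon
    push_neg at hcon
    obtain ⟨h1, h2⟩ := hcon
    set X : Equiv.Perm unitInterval := (x : Equiv.Perm unitInterval)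
    set Y : Equiv.Perm unitInterval := (y : Equiv.Perm unitInterval)
    set y1 : unitInterval := (T ^ i)⁻¹ z with hy1
    set y2 : unitInterval := (T ^ j)⁻¹ z with hy2
    have hX1 : X y1 ≠ y1 := by
      intro h
      apply h1
      show (T ^ i) (X ((T ^ i)⁻¹ z)) = z
      rw [h]
      exact Equiv.apply_symm_apply _ _
    have hY2 : Y y2 ≠ y2 := by
      intro h
      apply h2
      show (T ^ j) (Y ((T ^ j)⁻¹ z)) = z
      rw [h]
      exact Equiv.apply_symm_apply _ _
    have hy1in : δ < (y1 : ℝ) ∧ (y1 : ℝ) < 1 - δ := by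
      by_contra hcc
      push_neg at hcc
      rcases le_or_gt (y1 : ℝ) δ with h | h
      · exact hX1 (hx y1 (Or.inl h))
      · exact hX1 (hx y1 (Or.inr (hcc h)))
    have hy2in : δ < (y2 : ℝ) ∧ (y2 : ℝ) < 1 - δ := by
      by_contra hcc
      push_neg at hcc
      rcases le_or_gt (y2 : ℝ) δ with h | h
      · exact hY2 (hy y2 (Or.inl h))
      · exact hY2 (hy y2 (Or.inr (hcc h)))
    have hk : i + (j - i - 1 + 1) = j := by omega
    have hTpow : T ^ i * T ^ (j - i - 1 + 1) = T ^ j := by rw [← pow_add, hk]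
    have hyy : y1 = (T ^ (j - i - 1 + 1)) y2 := by
      have : (T ^ (j - i - 1 + 1)) ((T ^ j)⁻¹ z) = (T ^ i)⁻¹ z := by
        apply (T ^ i).injective
        have : (T ^ i) ((T ^ (j - i - 1 + 1)) ((T ^ j)⁻¹ z)) =
            (T ^ i * T ^ (j - i - 1 + 1)) ((T ^ j)⁻¹ z) := rfl
        rw [this, hTpow]
        exact (Equiv.apply_symm_apply _ _).trans (Equiv.apply_symm_apply _ _).symm
      exact this.symm
    have := hdisp (j - i - 1) y2 (le_of_lt hy2in.2)
    rw [← hyy] at this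
    linarith [hy1in.1]
  have hcomm : ∀ i j : ℕ, ∀ x y : G, i ≠ j → Fx x → Fx y →
      Commute (SclAux.ctc t i x) (SclAux.ctc t j y) := by
    intro i j x y hij hx hy
    have base : ∀ i j : ℕ, ∀ x y : G, i < j → Fx x → Fx y →
        Commute (SclAux.ctc t i x) (SclAux.ctc t j y) := by
      intro i j x y hlt hx hy
      apply commute_of_coe
      have hco : ∀ (m : ℕ) (w : G), ((SclAux.ctc t m w : G) : Equiv.Perm unitInterval) =
          T ^ m * (w : Equiv.Perm unitInterval) * (T ^ m)⁻¹ := by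
        intro m w
        simp [SclAux.ctc, hT]
      rw [hco, hco]
      exact (hdisj i j x y hlt hx hy).commute
    rcases Ne.lt_or_gt hij with h | h
    · exact base i j x y h hx hy
    · exact (base j i y x h hy hx).symm
  -- Step 6: the commutator length bound.
  have hLmem : ∀ p ∈ L, Fx p.1 ∧ Fx p.2 := by
    intro p hp
    exact ⟨(hδL p hp).1, (hδL p hp).2⟩
  have hbound : ∀ n : ℕ, commLength (g ^ n) ≤ L.length + 1 := by
    intro n
    obtain ⟨a, b, hab⟩ := SclAux.pow_eq_commutator_prod hcomm hFone hFmul hFinv L hLmem hgL n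
    exact Nat.sInf_le ⟨a, b, hab⟩
  -- Step 7: conclude.
  have htend : Tendsto (fun n : ℕ => (commLength (g ^ n) : ℝ) / n) atTop (nhds 0) := by
    apply squeeze_zero (g := fun n : ℕ => ((L.length + 1 : ℕ) : ℝ) / n)
    · intro n
      positivity
    · intro n
      rcases Nat.eq_zero_or_pos n with rfl | hn
      · simp
      · have hcast : (commLength (g ^ n) : ℝ) ≤ ((L.length + 1 : ℕ) : ℝ) := by
          exact_mod_cast hbound n
        have hnpos : (0 : ℝ) < n := by exact_mod_cast hn
        gcongr
    · exact tendsto_const_div_atTop_nhds_zero_nat _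
  unfold scl
  exact htend.liminf_eq
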